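/- For every integer n ≥ 2 and real λ > 0, lim_{X→∞} ∫_X^{λX} f_{n+1}(t)/t^n dt = (ln λ)/(n−1)!. -/

import Mathlib

open Real MeasureTheory Filter Finset

noncomputable def f (n : ℕ) (t : ℝ) : ℝ :=
  if n % 2 = 1 then
    (-1 : ℝ) ^ (n / 2) *
      (Real.sin t - ∑ k ∈ Finset.range (n / 2), (-1 : ℝ) ^ k * t ^ (2 * k + 1) / (Nat.factorial (2 * k + 1)))
  else
    (-1 : ℝ) ^ (n / 2) *
      (Real.cos t - ∑ k ∈ Finset.range (n / 2), (-1 : ℝ) ^ k * t ^ (2 * k) / (Nat.factorial (2 * k)))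

lemma f_cont (m : ℕ) : Continuous (f m) := by
  unfold f
  split
  · exact continuous_const.mul (Real.continuous_sin.sub
      (continuous_finset_sum _ fun k _ => by fun_prop))
  · exact continuous_const.mul (Real.continuous_cos.sub
      (continuous_finset_sum _ fun k _ => by fun_prop))

lemma f_key (n : ℕ) (hn : 2 ≤ n) (t : ℝ) (ht : 1 ≤ t) :
    |f (n + 1) t - t ^ (n - 1) / ((n - 1).factorial : ℝ)| ≤ (1 + n) * t ^ (n - 2) := by
  have ht0 : (0 : ℝ) < t := lt_of_lt_of_le one_pos ht
  have htn2 : (1 : ℝ) ≤ t ^ (n - 2) := one_le_pow₀ ht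
  rcases Nat.even_or_odd n with ⟨j, hj⟩ | ⟨j, hj⟩
  · -- n = j + j even, n + 1 odd
    obtain ⟨m, hm⟩ : ∃ m, j = m + 1 := ⟨j - 1, by omega⟩
    have h1 : (n + 1) % 2 = 1 := by omega
    have h2 : (n + 1) / 2 = m + 1 := by omega
    have h3 : n - 1 = 2 * m + 1 := by omega
    simp only [f, h1, h2, h3, Finset.sum_range_succ, if_true]
    have e1 : (-1 : ℝ) ^ (m + 1) * (-1 : ℝ) ^ m = -1 := by
      rw [← pow_add]
      exact Odd.neg_one_pow ⟨m, by ring⟩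
    have heq : (-1 : ℝ) ^ (m + 1) *
        (Real.sin t - ((∑ k ∈ Finset.range m, (-1 : ℝ) ^ k * t ^ (2 * k + 1) / ((2 * k + 1).factorial : ℝ))
          + (-1 : ℝ) ^ m * t ^ (2 * m + 1) / ((2 * m + 1).factorial : ℝ)))
        - t ^ (2 * m + 1) / ((2 * m + 1).factorial : ℝ)
        = (-1 : ℝ) ^ (m + 1) *
        (Real.sin t - ∑ k ∈ Finset.range m, (-1 : ℝ) ^ k * t ^ (2 * k + 1) / ((2 * k + 1).factorial : ℝ)) := by
      linear_combination (-(t ^ (2 * m + 1) / ((2 * m + 1).factorial : ℝ))) * e1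
    rw [heq, abs_mul, abs_pow, abs_neg, abs_one, one_pow, one_mul]
    have hsum : |∑ k ∈ Finset.range m, (-1 : ℝ) ^ k * t ^ (2 * k + 1) / ((2 * k + 1).factorial : ℝ)|
        ≤ m * t ^ (n - 2) := by
      calc |∑ k ∈ Finset.range m, (-1 : ℝ) ^ k * t ^ (2 * k + 1) / ((2 * k + 1).factorial : ℝ)|
          ≤ ∑ k ∈ Finset.range m, |(-1 : ℝ) ^ k * t ^ (2 * k + 1) / ((2 * k + 1).factorial : ℝ)| :=
            Finset.abs_sum_le_sum_abs _ _
        _ ≤ ∑ k ∈ Finset.range m, t ^ (n - 2) := by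
            apply Finset.sum_le_sum
            intro k hk
            rw [Finset.mem_range] at hk
            rw [abs_div, abs_mul, abs_pow, abs_neg, abs_one, one_pow, one_mul, abs_pow,
              abs_of_pos ht0, Nat.abs_cast]
            calc t ^ (2 * k + 1) / ((2 * k + 1).factorial : ℝ) ≤ t ^ (2 * k + 1) / 1 := by
                  apply div_le_div_of_nonneg_left (by positivity) one_pos
                  exact_mod_cast Nat.one_le_iff_ne_zero.mpr (Nat.factorial_ne_zero _)
              _ = t ^ (2 * k + 1) := by ring
              _ ≤ t ^ (n - 2) := pow_le_pow_right₀ ht (by omega)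
        _ = m * t ^ (n - 2) := by rw [Finset.sum_const, Finset.card_range, nsmul_eq_mul]
    calc |Real.sin t - ∑ k ∈ Finset.range m, (-1 : ℝ) ^ k * t ^ (2 * k + 1) / ((2 * k + 1).factorial : ℝ)|
        ≤ |Real.sin t| + |∑ k ∈ Finset.range m, (-1 : ℝ) ^ k * t ^ (2 * k + 1) / ((2 * k + 1).factorial : ℝ)| :=
          abs_sub _ _
      _ ≤ 1 + m * t ^ (n - 2) := add_le_add (Real.abs_sin_le_one t) hsum
      _ ≤ 1 * t ^ (n - 2) + n * t ^ (n - 2) := by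
          apply add_le_add
          · simpa using htn2
          · apply mul_le_mul_of_nonneg_right _ (by positivity)
            exact_mod_cast Nat.cast_le.mpr (by omega)
      _ = (1 + n) * t ^ (n - 2) := by ring
  · -- n = 2j + 1 odd, n + 1 even
    have h1 : ¬ (n + 1) % 2 = 1 := by omega
    have h2 : (n + 1) / 2 = j + 1 := by omega
    have h3 : n - 1 = 2 * j := by omega
    simp only [f, h2, h3, Finset.sum_range_succ]
    rw [if_neg h1]
    have e1 : (-1 : ℝ) ^ (j + 1) * (-1 : ℝ) ^ j = -1 := by
      rw [← pow_add]
      exact Odd.neg_one_pow ⟨j, by ring⟩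
    have heq : (-1 : ℝ) ^ (j + 1) *
        (Real.cos t - ((∑ k ∈ Finset.range j, (-1 : ℝ) ^ k * t ^ (2 * k) / ((2 * k).factorial : ℝ))
          + (-1 : ℝ) ^ j * t ^ (2 * j) / ((2 * j).factorial : ℝ)))
        - t ^ (2 * j) / ((2 * j).factorial : ℝ)
        = (-1 : ℝ) ^ (j + 1) *
        (Real.cos t - ∑ k ∈ Finset.range j, (-1 : ℝ) ^ k * t ^ (2 * k) / ((2 * k).factorial : ℝ)) := by
      linear_combination (-(t ^ (2 * j) / ((2 * j).factorial : ℝ))) * e1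
    rw [heq, abs_mul, abs_pow, abs_neg, abs_one, one_pow, one_mul]
    have hsum : |∑ k ∈ Finset.range j, (-1 : ℝ) ^ k * t ^ (2 * k) / ((2 * k).factorial : ℝ)|
        ≤ j * t ^ (n - 2) := by
      calc |∑ k ∈ Finset.range j, (-1 : ℝ) ^ k * t ^ (2 * k) / ((2 * k).factorial : ℝ)|
          ≤ ∑ k ∈ Finset.range j, |(-1 : ℝ) ^ k * t ^ (2 * k) / ((2 * k).factorial : ℝ)| :=
            Finset.abs_sum_le_sum_abs _ _
        _ ≤ ∑ k ∈ Finset.range j, t ^ (n - 2) := by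
            apply Finset.sum_le_sum
            intro k hk
            rw [Finset.mem_range] at hk
            rw [abs_div, abs_mul, abs_pow, abs_neg, abs_one, one_pow, one_mul, abs_pow,
              abs_of_pos ht0, Nat.abs_cast]
            calc t ^ (2 * k) / ((2 * k).factorial : ℝ) ≤ t ^ (2 * k) / 1 := by
                  apply div_le_div_of_nonneg_left (by positivity) one_pos
                  exact_mod_cast Nat.one_le_iff_ne_zero.mpr (Nat.factorial_ne_zero _)
              _ = t ^ (2 * k) := by ring
              _ ≤ t ^ (n - 2) := pow_le_pow_right₀ ht (by omega)
        _ = j * t ^ (n - 2) := by rw [Finset.sum_const, Finset.card_range, nsmul_eq_mul]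
    calc |Real.cos t - ∑ k ∈ Finset.range j, (-1 : ℝ) ^ k * t ^ (2 * k) / ((2 * k).factorial : ℝ)|
        ≤ |Real.cos t| + |∑ k ∈ Finset.range j, (-1 : ℝ) ^ k * t ^ (2 * k) / ((2 * k).factorial : ℝ)| :=
          abs_sub _ _
      _ ≤ 1 + j * t ^ (n - 2) := add_le_add (Real.abs_cos_le_one t) hsum
      _ ≤ 1 * t ^ (n - 2) + n * t ^ (n - 2) := by
          apply add_le_add
          · simpa using htn2
          · apply mul_le_mul_of_nonneg_right _ (by positivity)
            exact_mod_cast Nat.cast_le.mpr (by omega)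
      _ = (1 + n) * t ^ (n - 2) := by ring

lemma f_key2 (n : ℕ) (hn : 2 ≤ n) (t : ℝ) (ht : 1 ≤ t) :
    |f (n + 1) t / t ^ n - 1 / (((n - 1).factorial : ℝ) * t)| ≤ (1 + n) / t ^ 2 := by
  have ht0 : (0 : ℝ) < t := lt_of_lt_of_le one_pos ht
  have hfac : (0 : ℝ) < ((n - 1).factorial : ℝ) := by exact_mod_cast (n - 1).factorial_pos
  have hpow : t ^ n = t ^ (n - 1) * t := by
    rw [← pow_succ]; congr 1; omega
  have e : 1 / (((n - 1).factorial : ℝ) * t) = (t ^ (n - 1) / ((n - 1).factorial : ℝ)) / t ^ n := by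
    rw [hpow]; field_simp
  rw [e, div_sub_div_same, abs_div, abs_of_pos (by positivity : (0:ℝ) < t ^ n)]
  rw [div_le_div_iff₀ (by positivity) (by positivity)]
  calc |f (n + 1) t - t ^ (n - 1) / ((n - 1).factorial : ℝ)| * t ^ 2
      ≤ ((1 + n) * t ^ (n - 2)) * t ^ 2 :=
        mul_le_mul_of_nonneg_right (f_key n hn t ht) (by positivity)
    _ = (1 + n) * t ^ n := by
        rw [mul_assoc, ← pow_add]; congr 2; omega

theorem stmt_4 (n : ℕ) (hn : 2 ≤ n) (lam : ℝ) (hlam : 0 < lam) :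
    Tendsto (fun X : ℝ => ∫ t in X..(lam * X), f (n + 1) t / t ^ n) atTop
      (nhds (Real.log lam / (Nat.factorial (n - 1)))) := by
  set C : ℝ := 1 + n with hC
  have hC0 : (0 : ℝ) ≤ C := by positivity
  have hfac : (0 : ℝ) < ((n - 1).factorial : ℝ) := by exact_mod_cast (n - 1).factorial_pos
  -- the error term
  set g : ℝ → ℝ := fun t => f (n + 1) t / t ^ n - 1 / (((n - 1).factorial : ℝ) * t) with hg
  -- integrability helpers
  have hInt : ∀ a b : ℝ, (0 : ℝ) ∉ Set.uIcc a b →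
      IntervalIntegrable (fun t => f (n + 1) t / t ^ n) volume a b := by
    intro a b h0
    apply ContinuousOn.intervalIntegrable
    exact ((f_cont (n + 1)).continuousOn.div (continuous_pow n).continuousOn
      (fun t htt => pow_ne_zero _ (fun h => h0 (h ▸ htt))))
  have hInt1 : ∀ a b : ℝ, (0 : ℝ) ∉ Set.uIcc a b →
      IntervalIntegrable (fun t => 1 / (((n - 1).factorial : ℝ) * t)) volume a b := by
    intro a b h0
    apply ContinuousOn.intervalIntegrable
    exact continuousOn_const.div (continuousOn_const.mul continuousOn_id)
      (fun t htt => mul_ne_zero (ne_of_gt hfac) (fun h => h0 (h ▸ htt)))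
  have hIntg : ∀ a b : ℝ, (0 : ℝ) ∉ Set.uIcc a b → IntervalIntegrable g volume a b :=
    fun a b h0 => (hInt a b h0).sub (hInt1 a b h0)
  -- main decomposition
  have hmain : ∀ X : ℝ, 1 ≤ X → 1 ≤ lam * X →
      ∫ t in X..(lam * X), f (n + 1) t / t ^ n
        = Real.log lam / ((n - 1).factorial : ℝ) + ∫ t in X..(lam * X), g t := by
    intro X hX1 hX2
    have h0 : (0 : ℝ) ∉ Set.uIcc X (lam * X) :=
      Set.notMem_uIcc_of_lt (by linarith) (by linarith)
    have h1int := hInt X (lam * X) h0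
    have h2int := hInt1 X (lam * X) h0
    have e1 : ∫ t in X..(lam * X), g t
        = (∫ t in X..(lam * X), f (n + 1) t / t ^ n)
          - ∫ t in X..(lam * X), 1 / (((n - 1).factorial : ℝ) * t) :=
      intervalIntegral.integral_sub h1int h2int
    have e2 : ∫ t in X..(lam * X), 1 / (((n - 1).factorial : ℝ) * t)
        = Real.log lam / ((n - 1).factorial : ℝ) := by
      have hrw : ∀ t : ℝ, 1 / (((n - 1).factorial : ℝ) * t)
          = (((n - 1).factorial : ℝ))⁻¹ * (1 / t) := by
        intro t; rw [one_div, mul_inv, one_div]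
      simp_rw [hrw]
      rw [intervalIntegral.integral_const_mul, integral_one_div h0]
      have hXne : X ≠ 0 := by linarith
      have : lam * X / X = lam := by field_simp
      rw [this, inv_mul_eq_div]
    rw [e1, e2]; ring
  -- bound on the error integral over ordered intervals
  have haux : ∀ a b : ℝ, 1 ≤ a → a ≤ b → ‖∫ t in a..b, g t‖ ≤ C * a⁻¹ := by
    intro a b ha hab
    have hb : (1 : ℝ) ≤ b := le_trans ha hab
    have h0 : (0 : ℝ) ∉ Set.uIcc a b := Set.notMem_uIcc_of_lt (by linarith) (by linarith)
    have hgint := hIntg a b h0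
    have hCint : IntervalIntegrable (fun t : ℝ => C / t ^ 2) volume a b := by
      apply ContinuousOn.intervalIntegrable
      exact continuousOn_const.div (continuousOn_pow 2)
        (fun t htt => pow_ne_zero _ (fun h => h0 (h ▸ htt)))
    have hC2 : ∫ t in a..b, C / t ^ 2 = C * (a⁻¹ - b⁻¹) := by
      have hrw : ∀ t : ℝ, C / t ^ 2 = C * t ^ (-2 : ℤ) := by
        intro t
        rw [zpow_neg, div_eq_mul_inv]
        congr 1
      simp_rw [hrw]
      rw [intervalIntegral.integral_const_mul, integral_zpow (Or.inr ⟨by norm_num, h0⟩)]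
      simp only [show (-2 : ℤ) + 1 = -1 by norm_num, zpow_neg_one]
      push_cast
      ring
    calc ‖∫ t in a..b, g t‖ ≤ ∫ t in a..b, ‖g t‖ :=
          intervalIntegral.norm_integral_le_integral_norm hab
      _ ≤ ∫ t in a..b, C / t ^ 2 := by
          apply intervalIntegral.integral_mono_on hab hgint.norm hCint
          intro t htt
          have ht1 : (1 : ℝ) ≤ t := le_trans ha htt.1
          simpa [hg, Real.norm_eq_abs] using f_key2 n hn t ht1
      _ = C * (a⁻¹ - b⁻¹) := hC2
      _ ≤ C * a⁻¹ := by
          apply mul_le_mul_of_nonneg_left _ hC0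
          have : (0 : ℝ) ≤ b⁻¹ := by positivity
          linarith
  -- the error integral tends to 0
  have hR : Tendsto (fun X : ℝ => ∫ t in X..(lam * X), g t) atTop (nhds 0) := by
    apply squeeze_zero_norm' (a := fun X : ℝ => (C + C * lam⁻¹) * X⁻¹)
    · filter_upwards [eventually_ge_atTop (max 1 lam⁻¹), eventually_gt_atTop 0] with X hX hX0
      have hX1 : 1 ≤ X := le_trans (le_max_left _ _) hX
      have hX2 : 1 ≤ lam * X := by
        have : lam⁻¹ ≤ X := le_trans (le_max_right _ _) hX
        calc (1:ℝ) = lam * lam⁻¹ := by rw [mul_inv_cancel₀ (ne_of_gt hlam)]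
          _ ≤ lam * X := mul_le_mul_of_nonneg_left this (le_of_lt hlam)
      have hXinv : (0:ℝ) ≤ X⁻¹ := by positivity
      rcases le_total X (lam * X) with hle | hle
      · calc ‖∫ t in X..(lam * X), g t‖ ≤ C * X⁻¹ := haux X (lam * X) hX1 hle
          _ ≤ (C + C * lam⁻¹) * X⁻¹ := by
              apply mul_le_mul_of_nonneg_right _ hXinv
              have : (0:ℝ) ≤ C * lam⁻¹ := by positivity
              linarith
      · have hsymm : ‖∫ t in X..(lam * X), g t‖ = ‖∫ t in (lam * X)..X, g t‖ := by
          rw [intervalIntegral.integral_symm, norm_neg]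
        rw [hsymm]
        calc ‖∫ t in (lam * X)..X, g t‖ ≤ C * (lam * X)⁻¹ := haux (lam * X) X hX2 hle
          _ = C * lam⁻¹ * X⁻¹ := by rw [mul_inv]; ring
          _ ≤ (C + C * lam⁻¹) * X⁻¹ := by
              apply mul_le_mul_of_nonneg_right _ hXinv
              linarith
    · have := tendsto_inv_atTop_zero (𝕜 := ℝ)
      have h2 := this.const_mul (C + C * lam⁻¹)
      simpa using h2
  -- conclude
  have hfinal : Tendsto (fun X : ℝ =>
      Real.log lam / ((n - 1).factorial : ℝ) + ∫ t in X..(lam * X), g t) atTop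
      (nhds (Real.log lam / ((n - 1).factorial : ℝ))) := by
    have := hR.const_add (Real.log lam / ((n - 1).factorial : ℝ))
    simpa using this
  apply hfinal.congr'
  filter_upwards [eventually_ge_atTop (max 1 lam⁻¹)] with X hX
  have hX1 : 1 ≤ X := le_trans (le_max_left _ _) hX
  have hX2 : 1 ≤ lam * X := by
    have : lam⁻¹ ≤ X := le_trans (le_max_right _ _) hX
    calc (1:ℝ) = lam * lam⁻¹ := by rw [mul_inv_cancel₀ (ne_of_gt hlam)]
      _ ≤ lam * X := mul_le_mul_of_nonneg_left this (le_of_lt hlam)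
  exact (hmain X hX1 hX2).symm
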